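/- If a connected graph on n vertices has its MST edges contained in the union of the first p strata, then Kruskal-EDS run on the stratification accepts n−1 edges before reaching stratum p, so the number of strata sorted is at most p. -/

import Mathlib

open Classical in
/-- One greedy step of Kruskal's algorithm: accept the edge `e` iff its endpoints lie in
distinct connected components of the graph formed by the previously accepted edges. -/
noncomputable def kruskalStep {V : Type*} (acc : List (V × V)) (e : V × V) : List (V × V) :=
  if (SimpleGraph.fromEdgeSet ((fun q : V × V => s(q.1, q.2)) '' {q | q ∈ acc})).Reachable
       e.1 e.2
  then acc else acc ++ [e]

/-- Kruskal's greedy algorithm, processing the given list of edges in order. -/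
noncomputable def kruskal {V : Type*} (edges : List (V × V)) : List (V × V) :=
  edges.foldl kruskalStep []

namespace KruskalEDSAux

open SimpleGraph

variable {V : Type*}

/-- The graph spanned by the accepted edges. -/
def gr (acc : List (V × V)) : SimpleGraph V :=
  SimpleGraph.fromEdgeSet ((fun q : V × V => s(q.1, q.2)) '' {q | q ∈ acc})

lemma kruskalStep_pos {acc : List (V × V)} {e : V × V}
    (h : (gr acc).Reachable e.1 e.2) : kruskalStep acc e = acc := if_pos h

lemma kruskalStep_neg {acc : List (V × V)} {e : V × V}
    (h : ¬ (gr acc).Reachable e.1 e.2) : kruskalStep acc e = acc ++ [e] := if_neg h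

lemma gr_nil : gr ([] : List (V × V)) = ⊥ := by
  have : {q : V × V | q ∈ ([] : List (V × V))} = ∅ := by ext q; simp
  simp [gr, this]

lemma gr_append (acc : List (V × V)) (e : V × V) :
    gr (acc ++ [e]) = gr acc ⊔ edge e.1 e.2 := by
  have h : {q : V × V | q ∈ acc ++ [e]} = {q | q ∈ acc} ∪ {e} := by ext q; simp; tauto
  rw [gr, h, Set.image_union, Set.image_singleton, fromEdgeSet_union]
  rfl

lemma gr_mono {l₁ l₂ : List (V × V)} (h : ∀ q ∈ l₁, q ∈ l₂) : gr l₁ ≤ gr l₂ :=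
  fromEdgeSet_mono (Set.image_mono h)

/-- Decomposition of reachability after adding one edge. -/
lemma reachable_sup_edge_cases {G : SimpleGraph V} {a b x y : V}
    (hab : ¬ G.Reachable a b) (h : (G ⊔ edge a b).Reachable x y) :
    G.Reachable x y ∨ (G.Reachable x a ∧ G.Reachable b y) ∨
      (G.Reachable x b ∧ G.Reachable a y) := by
  obtain ⟨w⟩ := h
  induction w with
  | nil => exact Or.inl (Reachable.refl _)
  | cons h w ih =>
    rcases h with hG' | he
    · rcases ih with h1 | ⟨h1, h2⟩ | ⟨h1, h2⟩
      · exact Or.inl (hG'.reachable.trans h1)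
      · exact Or.inr (Or.inl ⟨hG'.reachable.trans h1, h2⟩)
      · exact Or.inr (Or.inr ⟨hG'.reachable.trans h1, h2⟩)
    · rw [edge_adj] at he
      obtain ⟨⟨rfl, rfl⟩ | ⟨rfl, rfl⟩, hne⟩ := he
      · rcases ih with h1 | ⟨h1, h2⟩ | ⟨h1, h2⟩
        · exact Or.inr (Or.inl ⟨Reachable.refl _, h1⟩)
        · exact absurd h1.symm hab
        · exact Or.inl h2
      · rcases ih with h1 | ⟨h1, h2⟩ | ⟨h1, h2⟩
        · exact Or.inr (Or.inr ⟨Reachable.refl _, h1⟩)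
        · exact Or.inl h2
        · exact absurd h1 hab

lemma edge_comm' (a b : V) : edge a b = edge b a := by
  ext x y
  rw [edge_adj, edge_adj]
  tauto

/-- The new edge is a bridge in `G ⊔ edge a b`. -/
lemma isBridge_sup_edge {G : SimpleGraph V} {a b : V}
    (hab : ¬ G.Reachable a b) : (G ⊔ edge a b).IsBridge s(a, b) := by
  have hne : a ≠ b := fun h => hab (h ▸ Reachable.refl a)
  rw [isBridge_iff]
  refine And.right (a := (G ⊔ edge a b).Adj a b) ⟨?_, ?_⟩
  · exact Or.inr (by rw [edge_adj]; exact ⟨Or.inl ⟨rfl, rfl⟩, hne⟩)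
  · intro hr
    apply hab
    refine hr.mono ?_
    intro x y hxy
    obtain ⟨h1 | h1, h2⟩ := hxy
    · exact h1
    · exact absurd h1 h2

/-- Adding an edge between two vertices in distinct components preserves acyclicity. -/
lemma isAcyclic_sup_edge {G : SimpleGraph V} {a b : V}
    (hG : G.IsAcyclic) (hab : ¬ G.Reachable a b) : (G ⊔ edge a b).IsAcyclic := by
  rw [isAcyclic_iff_forall_adj_isBridge]
  intro v w hvw
  rcases hvw with hvw | he
  · rw [isBridge_iff]
    refine And.right (a := (G ⊔ edge a b).Adj v w) ⟨Or.inl hvw, ?_⟩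
    intro hr
    have hle : (G ⊔ edge a b) \ fromEdgeSet {s(v, w)} ≤
        (G \ fromEdgeSet {s(v, w)}) ⊔ edge a b := by
      intro x y hxy
      obtain ⟨h1 | h1, h2⟩ := hxy
      · exact Or.inl ⟨h1, h2⟩
      · exact Or.inr h1
    have hab' : ¬ (G \ fromEdgeSet {s(v, w)}).Reachable a b :=
      fun h => hab (h.mono sdiff_le)
    have hbr := (isAcyclic_iff_forall_adj_isBridge.mp hG) hvw
    rw [isBridge_iff] at hbr
    rcases reachable_sup_edge_cases hab' (hr.mono hle) with h1 | ⟨h1, h2⟩ | ⟨h1, h2⟩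
    · exact hbr h1
    · exact hab ((h1.mono sdiff_le).symm.trans
        (hvw.reachable.trans (h2.mono sdiff_le).symm))
    · exact hab ((h2.mono sdiff_le).trans
        (hvw.symm.reachable.trans (h1.mono sdiff_le)))
  · rw [edge_adj] at he
    obtain ⟨⟨rfl, rfl⟩ | ⟨rfl, rfl⟩, hne⟩ := he
    · exact isBridge_sup_edge hab
    · rw [Sym2.eq_swap]
      exact isBridge_sup_edge hab

/-- Master invariant of the greedy fold. -/
lemma foldl_spec (l : List (V × V)) : ∀ acc : List (V × V),
    (∀ q ∈ acc, q ∈ l.foldl kruskalStep acc) ∧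
    (∀ q ∈ l, (gr (l.foldl kruskalStep acc)).Reachable q.1 q.2) ∧
    ((gr acc).IsAcyclic → (gr (l.foldl kruskalStep acc)).IsAcyclic) ∧
    ((∀ q ∈ acc, q.1 ≠ q.2) →
      (∀ q ∈ l.foldl kruskalStep acc, q.1 ≠ q.2) ∧
      ((acc.map (fun q : V × V => s(q.1, q.2))).Nodup →
        ((l.foldl kruskalStep acc).map (fun q : V × V => s(q.1, q.2))).Nodup)) := by
  induction l with
  | nil =>
    intro acc
    refine ⟨fun q hq => hq, by simp, fun h => h, fun h => ⟨h, fun h' => h'⟩⟩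
  | cons e l ih =>
    intro acc
    rw [List.foldl_cons]
    by_cases hr : (gr acc).Reachable e.1 e.2
    · rw [kruskalStep_pos hr]
      obtain ⟨hA, hC, hD, hE⟩ := ih acc
      refine ⟨hA, ?_, hD, hE⟩
      intro q hq
      rcases List.mem_cons.mp hq with rfl | hq
      · exact hr.mono (gr_mono hA)
      · exact hC q hq
    · rw [kruskalStep_neg hr]
      have hne : e.1 ≠ e.2 := fun h => hr (h ▸ Reachable.refl e.1)
      obtain ⟨hA, hC, hD, hE⟩ := ih (acc ++ [e])
      have hadj : (gr (acc ++ [e])).Adj e.1 e.2 := by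
        rw [gr_append]
        exact Or.inr (by rw [edge_adj]; exact ⟨Or.inl ⟨rfl, rfl⟩, hne⟩)
      refine ⟨?_, ?_, ?_, ?_⟩
      · intro q hq
        exact hA q (by simp [hq])
      · intro q hq
        rcases List.mem_cons.mp hq with rfl | hq
        · exact hadj.reachable.mono (gr_mono hA)
        · exact hC q hq
      · intro hac
        apply hD
        rw [gr_append]
        exact isAcyclic_sup_edge hac hr
      · intro hdiag
        have hdiag' : ∀ q ∈ acc ++ [e], q.1 ≠ q.2 := by
          intro q hq
          rcases List.mem_append.mp hq with hq | hq
          · exact hdiag q hq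
          · rw [List.mem_singleton] at hq; exact hq ▸ hne
        refine ⟨(hE hdiag').1, ?_⟩
        intro hnd
        apply (hE hdiag').2
        rw [List.map_append, List.map_singleton]
        apply List.Nodup.append hnd (List.nodup_singleton _)
        intro x hx hx'
        rw [List.mem_singleton] at hx'
        subst hx'
        rw [List.mem_map] at hx
        obtain ⟨q, hq, hqe⟩ := hx
        apply hr
        refine Adj.reachable ?_
        rw [gr, fromEdgeSet_adj]
        exact ⟨⟨q, hq, hqe⟩, hne⟩

/-- Transfer reachability along adjacency-wise reachability. -/
lemma reachable_transfer {G H : SimpleGraph V}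
    (h : ∀ x y, G.Adj x y → H.Reachable x y) {x y : V} (hxy : G.Reachable x y) :
    H.Reachable x y := by
  obtain ⟨w⟩ := hxy
  induction w with
  | nil => exact Reachable.refl _
  | cons h' w ih => exact (h _ _ h').trans ih

end KruskalEDSAux

/-- **Early termination of Kruskal-EDS.**
Let the edge set of a finite connected graph `G` on `n` vertices be partitioned into
strata `L 0, …, L (k-1)` that are valid for Kruskal (weights nondecreasing across strata,
each stratum sorted internally).  If some minimum spanning tree `T` of `G` has all its
edges in the union of the first `p` strata, then the greedy algorithm run on the
concatenation of the first `p` strata already accepts `n − 1` edges; hence Kruskal-EDS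
halts having sorted at most `p` strata. -/
theorem kruskal_eds_early_termination
    {V : Type*} [Fintype V] (G : SimpleGraph V) (w : Sym2 V → ℝ)
    (hG : G.Connected)
    (k : ℕ) (L : ℕ → List (V × V))
    (hcover : ∀ e : Sym2 V, e ∈ G.edgeSet ↔ ∃ i < k, ∃ q ∈ L i, s(q.1, q.2) = e)
    (hnodup : (((List.range k).flatMap L).map fun q => s(q.1, q.2)).Nodup)
    (hintra : ∀ i < k, (L i).Pairwise (fun q q' => w s(q.1, q.2) ≤ w s(q'.1, q'.2)))
    (hinter : ∀ i j, i < j → j < k →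
      ∀ q ∈ L i, ∀ q' ∈ L j, w s(q.1, q.2) ≤ w s(q'.1, q'.2))
    (T : SimpleGraph V) (hTG : T ≤ G) (hT : T.IsTree)
    (hTmin : ∀ T' : SimpleGraph V, T' ≤ G → T'.IsTree →
      (∑ᶠ e ∈ T.edgeSet, w e) ≤ ∑ᶠ e ∈ T'.edgeSet, w e)
    (p : ℕ) (hpk : p ≤ k)
    (hTp : T.edgeSet ⊆ (fun q : V × V => s(q.1, q.2)) '' {q | q ∈ (List.range p).flatMap L}) :
    (kruskal ((List.range p).flatMap L)).length = Fintype.card V - 1 := by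
  classical
  open SimpleGraph KruskalEDSAux in
  set l : List (V × V) := (List.range p).flatMap L with hl
  set R : List (V × V) := kruskal l with hR
  have hRfold : R = l.foldl kruskalStep [] := rfl
  obtain ⟨hA, hC, hD, hE⟩ := foldl_spec l ([] : List (V × V))
  rw [← hRfold] at hA hC hD hE
  have hdiag : ∀ q ∈ R, q.1 ≠ q.2 := (hE (by simp)).1
  have hnd : (R.map (fun q : V × V => s(q.1, q.2))).Nodup :=
    (hE (by simp)).2 (by simp)
  have hacyc : (gr R).IsAcyclic := hD (by rw [gr_nil]; exact isAcyclic_bot)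
  -- connectivity of the output
  have hconn : (gr R).Connected := by
    rw [connected_iff]
    refine ⟨?_, hG.nonempty⟩
    intro x y
    refine reachable_transfer (G := T) ?_ (hT.isConnected.preconnected x y)
    intro a b hab
    obtain ⟨q, hq, hqe⟩ := hTp (T.mem_edgeSet.mpr hab)
    rw [Sym2.eq_iff] at hqe
    rcases hqe with ⟨h1, h2⟩ | ⟨h1, h2⟩
    · rw [← h1, ← h2]; exact hC q hq
    · rw [← h1, ← h2]; exact (hC q hq).symm
  have htree : (gr R).IsTree := ⟨hconn, hacyc⟩
  haveI : Fintype (gr R).edgeSet := Set.Finite.fintype (Set.toFinite _)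
  have hcard := htree.card_edgeFinset
  -- the edge finset of the output is exactly the accepted edges
  have hfin : (gr R).edgeFinset = (R.map (fun q : V × V => s(q.1, q.2))).toFinset := by
    ext e
    simp only [mem_edgeFinset, List.mem_toFinset, List.mem_map]
    constructor
    · intro he
      rw [gr, edgeSet_fromEdgeSet, Set.mem_diff] at he
      obtain ⟨q, hq, hqe⟩ := he.1
      exact ⟨q, hq, hqe⟩
    · rintro ⟨q, hq, rfl⟩
      rw [gr, edgeSet_fromEdgeSet, Set.mem_diff]
      refine ⟨⟨q, hq, rfl⟩, ?_⟩
      rw [Sym2.mem_diagSet, Sym2.isDiag_iff_proj_eq]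
      exact hdiag q hq
  rw [hfin, List.card_toFinset, hnd.dedup, List.length_map] at hcard
  omega
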